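/- arXiv:1701.06478 — 5 statements merged into one kernel-verified Lean document; each statement's English description precedes it below -/
import Mathlib

section
/- Let n ≥ 1 and let c and d be two distinct codewords of the Varshamov–Tenengolts code VT(n). Then the sets of binary strings of length n−1 obtainable from c and from d by a single deletion are disjoint: D₋₁(c) ∩ D₋₁(d) = ∅. In other words, VT(n) is a single-deletion-error correcting code. -/
/-- The checksum of a binary string `c = (c_1, …, c_n)` is `Σ_{i=1}^n i·c_i`
(1-indexed, evaluated over the integers/naturals). -/
def checksum (c : List Bool) : ℕ :=
  ∑ i ∈ Finset.range c.length, (i + 1) * (c.getD i false).toNat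

/-- The Varshamov–Tenengolts code `VT(n)`: binary strings of length `n`
whose checksum is divisible by `n + 1`. -/
def VT (n : ℕ) : Set (List Bool) :=
  {c | c.length = n ∧ (n + 1) ∣ checksum c}

/-- `del1 x`: the set of strings obtainable from `x` by deleting one bit. -/
def del1 (x : List Bool) : Set (List Bool) :=
  {w | ∃ p < x.length, w = x.take p ++ x.drop (p + 1)}

/-! ### Auxiliary definitions and lemmas -/

/-- Number of `true` bits in a string. -/
def ones (l : List Bool) : ℕ := l.count true

/-- Insert bit `b` at position `p`. -/
def ins (w : List Bool) (p : ℕ) (b : Bool) : List Bool := w.take p ++ b :: w.drop p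

lemma ones_cons (a : Bool) (l : List Bool) : ones (a :: l) = a.toNat + ones l := by
  simp [ones, List.count_cons]
  cases a <;> simp [Nat.add_comm]

lemma ones_le (l : List Bool) : ones l ≤ l.length := List.count_le_length

lemma ones_eq_sum (l : List Bool) :
    ones l = ∑ i ∈ Finset.range l.length, (l.getD i false).toNat := by
  induction l with
  | nil => simp [ones]
  | cons a t ih =>
    rw [ones_cons, ih, List.length_cons, Finset.sum_range_succ']
    simp [Nat.add_comm]

lemma checksum_cons (a : Bool) (l : List Bool) :
    checksum (a :: l) = a.toNat + checksum l + ones l := by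
  rw [checksum, List.length_cons, Finset.sum_range_succ']
  simp only [List.getD_cons_succ, List.getD_cons_zero, Nat.zero_add, Nat.mul_one, Nat.one_mul]
  rw [checksum, ones_eq_sum]
  have : ∀ i ∈ Finset.range l.length, (i + 1 + 1) * (l.getD i false).toNat
      = (i + 1) * (l.getD i false).toNat + (l.getD i false).toNat := by
    intro i _; ring
  rw [Finset.sum_congr rfl this, Finset.sum_add_distrib]
  ring

lemma ones_append (l m : List Bool) : ones (l ++ m) = ones l + ones m := by
  simp [ones, List.count_append]

lemma ones_ins (w : List Bool) (p : ℕ) (b : Bool) :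
    ones (ins w p b) = b.toNat + ones w := by
  rw [ins, ones_append, ones_cons]
  conv_rhs => rw [← List.take_append_drop p w, ones_append]
  ring

lemma ins_zero (w : List Bool) (b : Bool) : ins w 0 b = b :: w := by simp [ins]

lemma ins_cons_succ (a : Bool) (t : List Bool) (p : ℕ) (b : Bool) :
    ins (a :: t) (p + 1) b = a :: ins t p b := by simp [ins]

lemma checksum_ins (w : List Bool) : ∀ (p : ℕ), p ≤ w.length → ∀ b : Bool,
    checksum (ins w p b) = checksum w + (p + 1) * b.toNat + ones (w.drop p) := by
  induction w with
  | nil =>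
    intro p hp b
    have : p = 0 := by simpa using hp
    subst this
    simp [ins, checksum, ones, Finset.sum_range_succ]
  | cons a t ih =>
    intro p hp b
    match p with
    | 0 =>
      rw [ins_zero, checksum_cons]
      simp [ones]
      ring
    | p + 1 =>
      rw [ins_cons_succ, checksum_cons, ih p (by simpa using hp) b, ones_ins, checksum_cons,
        List.drop_succ_cons]
      ring

lemma length_ins (w : List Bool) (p : ℕ) (hp : p ≤ w.length) (b : Bool) :
    (ins w p b).length = w.length + 1 := by
  simp [ins]
  omega

lemma ins_eq_ins (b : Bool) : ∀ (w : List Bool) (p q : ℕ), p ≤ q → q ≤ w.length →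
    (∀ x ∈ (w.drop p).take (q - p), x = b) → ins w p b = ins w q b := by
  intro w
  induction w with
  | nil =>
    intro p q hpq hq _
    have hq0 : q = 0 := by simpa using hq
    have hp0 : p = 0 := by omega
    subst hq0 hp0; rfl
  | cons a t ih =>
    intro p q hpq hq hall
    match p, q with
    | 0, 0 => rfl
    | 0, q + 1 =>
      have ha : a = b := hall a (by simp)
      rw [ins_zero, ins_cons_succ, ha]
      congr 1
      rw [← ins_zero t b]
      exact ih 0 q (Nat.zero_le _) (by simpa using hq) (by simpa using fun x hx => hall x (by simp [hx]))
    | p + 1, q + 1 =>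
      rw [ins_cons_succ, ins_cons_succ]
      congr 1
      exact ih p q (by omega) (by simpa using hq) (by simpa using hall)

lemma vt_key (w : List Bool) (p q : ℕ) (bp bq : Bool) (hp : p ≤ w.length)
    (hq : q ≤ w.length) (hpq : p ≤ q)
    (hdp : (w.length + 2) ∣ checksum (ins w p bp))
    (hdq : (w.length + 2) ∣ checksum (ins w q bq)) :
    ins w p bp = ins w q bq := by
  have hA := checksum_ins w p hp bp
  have hB := checksum_ins w q hq bq
  set A := (p + 1) * bp.toNat + ones (w.drop p) with hAdef
  set B := (q + 1) * bq.toNat + ones (w.drop q) with hBdef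
  -- bounds
  have hop : ones (w.drop p) ≤ w.length - p := by
    have := ones_le (w.drop p); simpa using this
  have hoq : ones (w.drop q) ≤ w.length - q := by
    have := ones_le (w.drop q); simpa using this
  have hA1 : A < w.length + 2 := by
    rw [hAdef]; cases bp <;> simp [Bool.toNat] <;> omega
  have hB1 : B < w.length + 2 := by
    rw [hBdef]; cases bq <;> simp [Bool.toNat] <;> omega
  -- A = B
  have hAB : A = B := by
    have hdp' : (w.length + 2) ∣ checksum w + A := by
      have h : checksum w + A = checksum (ins w p bp) := by rw [hA, hAdef]; ring
      rw [h]; exact hdp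
    have hdq' : (w.length + 2) ∣ checksum w + B := by
      have h : checksum w + B = checksum (ins w q bq) := by rw [hB, hBdef]; ring
      rw [h]; exact hdq
    have h1 : checksum w + A ≡ checksum w + B [MOD w.length + 2] := by
      calc checksum w + A ≡ 0 [MOD w.length + 2] :=
            (Nat.modEq_zero_iff_dvd).mpr hdp'
        _ ≡ checksum w + B [MOD w.length + 2] :=
            ((Nat.modEq_zero_iff_dvd).mpr hdq').symm
    have h2 : A ≡ B [MOD w.length + 2] := Nat.ModEq.add_left_cancel' _ h1
    have := h2.eq_of_lt_of_lt hA1 hB1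
    exact this
  -- segment decomposition
  set seg := (w.drop p).take (q - p) with hsegdef
  have hsplit : w.drop p = seg ++ w.drop q := by
    rw [hsegdef]
    conv_lhs => rw [← List.take_append_drop (q - p) (w.drop p)]
    congr 1
    rw [List.drop_drop]
    congr 1
    omega
  have hosplit : ones (w.drop p) = ones seg + ones (w.drop q) := by
    rw [hsplit, ones_append]
  have hseglen : seg.length = q - p := by
    rw [hsegdef]; simp; omega
  have hosle : ones seg ≤ q - p := hseglen ▸ ones_le seg
  rw [hAdef, hBdef] at hAB
  cases bp <;> cases bq <;> simp [Bool.toNat] at hAB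
  · -- false false
    have hz : ones seg = 0 := by omega
    have : ∀ x ∈ seg, x = false := by
      intro x hx
      by_contra hxb
      have : x = true := by simpa using hxb
      subst this
      have := List.count_eq_zero.mp hz
      exact this hx
    exact ins_eq_ins false w p q hpq hq this
  · -- false true : contradiction
    omega
  · -- true false : contradiction
    omega
  · -- true true
    have hz : ones seg = seg.length := by omega
    have : ∀ x ∈ seg, x = true := by
      intro x hx
      exact (List.count_eq_length.mp hz x hx).symm
    exact ins_eq_ins true w p q hpq hq this

lemma del_to_ins (x w : List Bool) (p : ℕ) (hp : p < x.length)
    (hw : w = x.take p ++ x.drop (p + 1)) :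
    x = ins w p (x.getD p false) ∧ w.length + 1 = x.length ∧ p ≤ w.length := by
  have hlen : w.length = x.length - 1 := by
    rw [hw]; simp; omega
  have hpw : p ≤ w.length := by omega
  have htp : (x.take p).length = p := by simp; omega
  have h1 : w.take p = x.take p := by
    rw [hw, List.take_append_of_le_length (by omega), List.take_take]
    simp
  have h2 : w.drop p = x.drop (p + 1) := by
    rw [hw, List.drop_append_of_le_length (by omega)]
    have hnil : (x.take p).drop p = [] := List.drop_eq_nil_of_le (by omega)
    rw [hnil]; simp
  refine ⟨?_, by omega, hpw⟩
  rw [ins, h1, h2, List.getD_eq_getElem x false hp]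
  conv_lhs => rw [← List.take_append_drop p x]
  congr 1
  exact (List.getElem_cons_drop hp).symm

/-- VT(n) is a single-deletion-error correcting code: the single-deletion
balls of two distinct codewords are disjoint. -/
theorem vt_single_deletion_correcting (n : ℕ) (hn : 1 ≤ n)
    (c d : List Bool) (hc : c ∈ VT n) (hd : d ∈ VT n) (hcd : c ≠ d) :
    del1 c ∩ del1 d = ∅ := by
  rw [Set.eq_empty_iff_forall_notMem]
  rintro w ⟨⟨p, hpc, hwc⟩, ⟨q, hqd, hwd⟩⟩
  obtain ⟨hcw, hlenc, hpw⟩ := del_to_ins c w p hpc hwc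
  obtain ⟨hdw, hlend, hqw⟩ := del_to_ins d w q hqd hwd
  have hcn : c.length = n := hc.1
  have hdn : d.length = n := hd.1
  have hwn : w.length + 2 = n + 1 := by omega
  have hdvc : (w.length + 2) ∣ checksum (ins w p (c.getD p false)) := by
    rw [hwn, ← hcw]; exact hc.2
  have hdvd : (w.length + 2) ∣ checksum (ins w q (d.getD q false)) := by
    rw [hwn, ← hdw]; exact hd.2
  rcases le_total p q with hpq | hqp
  · exact hcd (by rw [hcw, hdw]; exact vt_key w p q _ _ hpw hqw hpq hdvc hdvd)
  · exact hcd (by rw [hcw, hdw]; exact (vt_key w q p _ _ hqw hpw hqp hdvd hdvc).symm)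
end

section
/- Let c and d be codewords of the Varshamov–Tenengolts code VT(n). If d can be obtained from c by a single insertion followed by a single deletion (i.e., there exists a binary string w of length n+1 with w ∈ D₊₁(c) and d ∈ D₋₁(w)), then d = c. -/
/-- `ins1 x`: the set of strings obtainable from `x` by inserting one bit. -/
def ins1 (x : List Bool) : Set (List Bool) :=
  {y | ∃ p ≤ x.length, ∃ b : Bool, y = x.take p ++ b :: x.drop p}

/- ### Auxiliary definitions and lemmas -/

def del (w : List Bool) (p : ℕ) : List Bool := w.take p ++ w.drop (p + 1)

def wt (t : List Bool) : ℕ := ∑ i ∈ Finset.range t.length, (t.getD i false).toNat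

lemma wt_cons (b : Bool) (t : List Bool) : wt (b :: t) = b.toNat + wt t := by
  unfold wt
  rw [List.length_cons, Finset.sum_range_succ']
  simp [List.getD_cons_succ, List.getD_cons_zero, add_comm]

lemma checksum_cons_s4 (b : Bool) (t : List Bool) :
    checksum (b :: t) = b.toNat + wt t + checksum t := by
  unfold checksum wt
  rw [List.length_cons, Finset.sum_range_succ']
  simp only [List.getD_cons_succ, List.getD_cons_zero, zero_add, one_mul]
  have h : ∀ i ∈ Finset.range t.length, (i + 1 + 1) * (t.getD i false).toNat
      = (t.getD i false).toNat + (i + 1) * (t.getD i false).toNat := by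
    intro i _; ring
  rw [Finset.sum_congr rfl h, Finset.sum_add_distrib]
  ring

lemma del_cons_zero (b : Bool) (t : List Bool) : del (b :: t) 0 = t := by
  simp [del]

lemma del_cons_succ (b : Bool) (t : List Bool) (k : ℕ) :
    del (b :: t) (k + 1) = b :: del t k := by
  simp [del]

lemma wt_del (t : List Bool) : ∀ k, k < t.length →
    wt t = wt (del t k) + (t.getD k false).toNat := by
  induction t with
  | nil => intro k hk; simp at hk
  | cons b t ih =>
    intro k hk
    cases k with
    | zero => simp [wt_cons, del_cons_zero, add_comm]
    | succ k =>
      rw [del_cons_succ, wt_cons, wt_cons, List.getD_cons_succ,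
        ih k (by simpa using hk)]
      ring

lemma checksum_del (w : List Bool) : ∀ p, p < w.length →
    checksum w = checksum (del w p) + (p + 1) * (w.getD p false).toNat
      + ∑ i ∈ Finset.Ico (p + 1) w.length, (w.getD i false).toNat := by
  induction w with
  | nil => intro p hp; simp at hp
  | cons b t ih =>
    intro p hp
    cases p with
    | zero =>
      rw [del_cons_zero, checksum_cons_s4, List.getD_cons_zero, List.length_cons]
      have h : ∑ i ∈ Finset.Ico 1 (t.length + 1), (((b :: t).getD i false)).toNat
          = wt t := by
        rw [Finset.sum_Ico_eq_sum_range]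
        simp only [Nat.add_sub_cancel]
        apply Finset.sum_congr rfl
        intro i _
        rw [add_comm 1 i, List.getD_cons_succ]
      rw [h]; ring
    | succ k =>
      have hk : k < t.length := by simpa using hp
      rw [del_cons_succ, checksum_cons_s4, checksum_cons_s4, List.getD_cons_succ,
        List.length_cons]
      have hre : ∑ i ∈ Finset.Ico (k + 1 + 1) (t.length + 1), (((b :: t).getD i false)).toNat
          = ∑ i ∈ Finset.Ico (k + 1) t.length, ((t.getD i false)).toNat := by
        rw [Finset.sum_Ico_eq_sum_range, Finset.sum_Ico_eq_sum_range]
        have h1 : t.length + 1 - (k + 1 + 1) = t.length - (k + 1) := by omega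
        rw [h1]
        apply Finset.sum_congr rfl
        intro i _
        have h2 : k + 1 + 1 + i = (k + 1 + i) + 1 := by omega
        rw [h2, List.getD_cons_succ]
      rw [hre]
      have h3 := ih k hk
      have h4 := wt_del t k hk
      have h5 : (k + 1 + 1) * (t.getD k false).toNat
          = (k + 1) * (t.getD k false).toNat + (t.getD k false).toNat := by ring
      rw [h5]
      linarith

lemma del_adj (w : List Bool) (p : ℕ) (hp : p + 1 < w.length)
    (h : w.getD p false = w.getD (p + 1) false) : del w p = del w (p + 1) := by
  have hp0 : p < w.length := by omega
  have h' : w[p] = w[p + 1] := by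
    rwa [List.getD_eq_getElem _ _ hp0, List.getD_eq_getElem _ _ hp] at h
  unfold del
  rw [List.take_succ, List.getElem?_eq_getElem hp0,
    List.drop_eq_getElem_cons hp]
  simp [h']

lemma del_const (w : List Bool) (p : ℕ) :
    ∀ k, p + k < w.length →
    (∀ i, p ≤ i → i ≤ p + k → w.getD i false = w.getD p false) →
    del w p = del w (p + k) := by
  intro k
  induction k with
  | zero => intro _ _; rfl
  | succ k ih =>
    intro hlen hconst
    have h1 := ih (by omega) (fun i hi1 hi2 => hconst i hi1 (by omega))
    rw [h1]
    have h2 : p + (k + 1) = (p + k) + 1 := by omega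
    rw [h2]
    apply del_adj _ _ (by omega)
    rw [hconst (p + k) (by omega) (by omega), hconst (p + k + 1) (by omega) (by omega)]

lemma no_dvd (n a b m : ℕ) (h : (n + 1) * b = (n + 1) * a + m)
    (h1 : 1 ≤ m) (h2 : m ≤ n) : False := by
  have hd : (n + 1) ∣ m := by
    have hx := Nat.dvd_sub (dvd_mul_right (n + 1) b) (dvd_mul_right (n + 1) a)
    have hm : (n + 1) * b - (n + 1) * a = m := by omega
    rwa [hm] at hx
  have := Nat.le_of_dvd (by omega) hd
  omega

lemma vt_main (n p q : ℕ) (w : List Bool) (hw : w.length = n + 1)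
    (hpq : p ≤ q) (hq : q < w.length)
    (hp' : (n + 1) ∣ checksum (del w p)) (hq' : (n + 1) ∣ checksum (del w q)) :
    del w p = del w q := by
  rcases Nat.eq_or_lt_of_le hpq with rfl | hlt
  · rfl
  have hp : p < w.length := lt_of_le_of_lt hpq hq
  set S := ∑ i ∈ Finset.Ico (p + 1) (q + 1), (w.getD i false).toNat with hS
  have e1 := checksum_del w p hp
  have e2 := checksum_del w q hq
  have hsplit : (∑ i ∈ Finset.Ico (p + 1) w.length, (w.getD i false).toNat)
      = S + ∑ i ∈ Finset.Ico (q + 1) w.length, (w.getD i false).toNat := by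
    rw [hS, Finset.sum_Ico_consecutive _ (by omega) (by omega)]
  rw [hsplit] at e1
  have key : checksum (del w p) + (p + 1) * (w.getD p false).toNat + S
      = checksum (del w q) + (q + 1) * (w.getD q false).toNat := by
    have h6 := e1.symm.trans e2
    linarith
  have hScard : S ≤ q - p := by
    have hb := Finset.sum_le_card_nsmul (Finset.Ico (p + 1) (q + 1))
      (fun i => (w.getD i false).toNat) 1 (fun x _ => Bool.toNat_le _)
    simp only [smul_eq_mul, mul_one, Nat.card_Ico] at hb
    omega
  obtain ⟨kp, hkp⟩ := hp'
  obtain ⟨kq, hkq⟩ := hq'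
  rw [hkp, hkq] at key
  -- the constant-segment conclusion, parametrized by the common bit value
  have conclude : (∀ i ∈ Finset.Ico (p + 1) (q + 1), w.getD i false = w.getD p false) →
      del w p = del w q := by
    intro hconst
    have h7 : q = p + (q - p) := by omega
    rw [h7]
    apply del_const w p (q - p) (by omega)
    intro i hi1 hi2
    rcases Nat.eq_or_lt_of_le hi1 with rfl | hi3
    · rfl
    · exact hconst i (by rw [Finset.mem_Ico]; omega)
  rcases Bool.eq_false_or_eq_true (w.getD p false) with hA | hA <;>
    rcases Bool.eq_false_or_eq_true (w.getD q false) with hB | hB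
  · -- true / true : S = q - p
    rw [hA, hB] at key
    simp only [Bool.toNat_true, mul_one] at key
    have hSqp : S = q - p := by
      by_contra hne
      exact no_dvd n kq kp (q - p - S) (by omega) (by omega) (by omega)
    apply conclude
    intro i hi
    rw [hA]
    by_contra hcon
    have hjf : (w.getD i false).toNat = 0 := by
      cases hww : w.getD i false
      · rfl
      · rw [hww] at hcon; simp at hcon
    have hsum : ∑ j ∈ Finset.Ico (p + 1) (q + 1), (w.getD j false).toNat
        = (∑ j ∈ (Finset.Ico (p + 1) (q + 1)).erase i,
          (w.getD j false).toNat) + (w.getD i false).toNat := by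
      rw [Finset.sum_erase_add _ _ hi]
    have hb := Finset.sum_le_card_nsmul ((Finset.Ico (p + 1) (q + 1)).erase i)
      (fun j => (w.getD j false).toNat) 1 (fun x _ => Bool.toNat_le _)
    rw [Finset.card_erase_of_mem hi] at hb
    simp only [smul_eq_mul, mul_one, Nat.card_Ico] at hb
    have hi' : p + 1 ≤ i ∧ i < q + 1 := by rwa [Finset.mem_Ico] at hi
    omega
  · -- true / false : contradiction
    rw [hA, hB] at key
    simp only [Bool.toNat_false, Bool.toNat_true, mul_zero, add_zero, mul_one] at key
    have hst : S = (∑ i ∈ Finset.Ico (p + 1) q, (w.getD i false).toNat)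
        + (w.getD q false).toNat := by
      rw [hS, Finset.sum_Ico_succ_top (by omega)]
    rw [hB] at hst
    simp only [Bool.toNat_false, add_zero] at hst
    have hb := Finset.sum_le_card_nsmul (Finset.Ico (p + 1) q)
      (fun i => (w.getD i false).toNat) 1 (fun x _ => Bool.toNat_le _)
    simp only [smul_eq_mul, mul_one, Nat.card_Ico] at hb
    exact absurd (no_dvd n kp kq (p + 1 + S) (by omega) (by omega) (by omega)) (fun h => h)
  · -- false / true : contradiction
    rw [hA, hB] at key
    simp only [Bool.toNat_false, Bool.toNat_true, mul_zero, add_zero, mul_one] at key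
    have hSge : 1 ≤ S := by
      have hq1 : q ∈ Finset.Ico (p + 1) (q + 1) := by rw [Finset.mem_Ico]; omega
      have hle := Finset.single_le_sum (f := fun i => (w.getD i false).toNat)
        (fun i _ => Nat.zero_le _) hq1
      simp only [hB, Bool.toNat_true] at hle
      omega
    exact absurd (no_dvd n kq kp (q + 1 - S) (by omega) (by omega) (by omega)) (fun h => h)
  · -- false / false : S = 0
    rw [hA, hB] at key
    simp only [Bool.toNat_false, mul_zero, add_zero] at key
    have hS0 : ∑ i ∈ Finset.Ico (p + 1) (q + 1), (w.getD i false).toNat = 0 := by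
      rw [← hS]
      by_contra hne
      exact no_dvd n kp kq S (by omega) (by omega) (by omega)
    apply conclude
    intro i hi
    have h9 : (w.getD i false).toNat = 0 := Finset.sum_eq_zero_iff.mp hS0 i hi
    rw [hA]
    cases hww : w.getD i false
    · rfl
    · rw [hww] at h9; simp at h9

/-- If a VT(n) codeword `d` is obtained from a VT(n) codeword `c` by a single
insertion followed by a single deletion, then `d = c`. -/
theorem vt_ins_then_del (n : ℕ) (c d : List Bool)
    (hc : c ∈ VT n) (hd : d ∈ VT n)
    (w : List Bool) (hwc : w ∈ ins1 c) (hdw : d ∈ del1 w) :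
    d = c := by
  obtain ⟨hcl, hcd⟩ := hc
  obtain ⟨hdl, hdd⟩ := hd
  obtain ⟨p, hp, b, hw⟩ := hwc
  obtain ⟨q, hq, hdq⟩ := hdw
  have htl : (c.take p).length = p := by
    rw [List.length_take]; omega
  have hwl : w.length = n + 1 := by
    rw [hw]; simp; omega
  have hcp : c = del w p := by
    have h1 : w.take p = c.take p := by
      rw [hw, List.take_left' htl]
    have h2 : w.drop (p + 1) = c.drop p := by
      have h3 : w.drop p = b :: c.drop p := by
        rw [hw, List.drop_left' htl]
      rw [← List.drop_drop, h3]
      simp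
    unfold del
    rw [h1, h2, List.take_append_drop]
  have hdq' : d = del w q := hdq
  rw [hdq', hcp]
  rw [hcp] at hcd
  rw [hdq'] at hdd
  rcases le_total p q with h | h
  · exact (vt_main n p q w hwl h hq hcd hdd).symm
  · exact vt_main n q p w hwl h (by omega) hdd hcd
end

section
/- Let c = (c_1,…,c_n) be a binary string, let 1 ≤ p ≤ n be a position with c_p = 1, and let c′ be the string of length n−1 obtained from c by deleting the bit at position p. Let R_1 be the number of indices i > p with c_i = 1 and let L_0 be the number of indices i < p with c_i = 0. Then checksum(c) − checksum(c′) = p + R_1 = 1 + ω + L_0, where ω is the weight of c′; in particular this difference is strictly greater than ω. -/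
lemma sum_toNat (l : List Bool) :
    ∑ i ∈ Finset.range l.length, (l.getD i false).toNat = l.count true := by
  induction l with
  | nil => simp
  | cons a t ih =>
    rw [List.length_cons, Finset.sum_range_succ']
    simp only [List.getD_cons_succ, List.getD_cons_zero, ih, List.count_cons]
    cases a <;> simp

lemma checksum_cons_s7 (x : Bool) (l : List Bool) :
    checksum (x :: l) = x.toNat + (checksum l + l.count true) := by
  unfold checksum
  rw [List.length_cons, Finset.sum_range_succ']
  simp only [List.getD_cons_succ, List.getD_cons_zero]
  have h : ∀ i ∈ Finset.range l.length,
      (i + 1 + 1) * (l.getD i false).toNat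
        = (i + 1) * (l.getD i false).toNat + (l.getD i false).toNat := by
    intros; ring
  rw [Finset.sum_congr rfl h, Finset.sum_add_distrib, sum_toNat]
  ring

lemma checksum_append_cons (A B : List Bool) (b : Bool) :
    checksum (A ++ b :: B)
      = checksum (A ++ B) + ((A.length + 1) * b.toNat + B.count true) := by
  induction A with
  | nil => simp [checksum_cons_s7]; ring
  | cons a t ih =>
    simp only [List.cons_append, checksum_cons_s7, ih, List.count_append,
      List.count_cons, List.length_cons]
    cases b <;> simp <;> ring

lemma count_true_add_false (l : List Bool) :
    l.count true + l.count false = l.length := by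
  induction l with
  | nil => simp
  | cons a t ih => cases a <;> simp [List.count_cons] <;> omega

/-- Deleting a `1` at (1-indexed) position `p` of `c` decreases the checksum by
`p + R₁`, where `R₁` is the number of 1's strictly to the right of position `p`.
Moreover `p + R₁ = 1 + ω + L₀` where `ω` is the weight of the resulting string
`c' = c.take (p-1) ++ c.drop p` and `L₀` is the number of 0's strictly to the
left of position `p`; in particular the checksum deficiency exceeds `ω`. -/
theorem checksum_delete_one (c : List Bool) (p : ℕ)
    (hp1 : 1 ≤ p) (hpn : p ≤ c.length)
    (hcp : c.getD (p - 1) false = true) :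
    checksum c
        = checksum (c.take (p - 1) ++ c.drop p) + (p + (c.drop p).count true) ∧
    p + (c.drop p).count true
        = 1 + (c.take (p - 1) ++ c.drop p).count true
            + (c.take (p - 1)).count false ∧
    (c.take (p - 1) ++ c.drop p).count true < p + (c.drop p).count true := by
  set A := c.take (p - 1) with hA
  set B := c.drop p with hB
  have hlt : p - 1 < c.length := by omega
  have hget : c.getD (p - 1) false = c.get ⟨p - 1, hlt⟩ := by
    rw [List.getD_eq_getElem _ _ hlt]; rfl
  have hdrop : c.drop (p - 1) = true :: B := by
    rw [hB, List.drop_eq_getElem_cons hlt]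
    congr 1
    · rw [List.getD_eq_getElem _ _ hlt] at hcp; exact hcp
    · congr 1; omega
  have hc : c = A ++ true :: B := by
    rw [hA, ← hdrop, List.take_append_drop]
  have hAlen : A.length = p - 1 := by
    rw [hA, List.length_take]; omega
  have h1 : checksum c = checksum (A ++ B) + (p + B.count true) := by
    rw [hc, checksum_append_cons]
    simp [hAlen]
    omega
  have h2 : p + B.count true = 1 + (A ++ B).count true + A.count false := by
    have := count_true_add_false A
    simp only [List.count_append]
    omega
  refine ⟨h1, h2, ?_⟩
  omega
end

section
/- (Correctness of the systematic VT encoder.) Let ℓ ≥ 1 and n = 2^ℓ. The positions in {1,…,n} that are powers of two are exactly 2^0, 2^1, …, 2^ℓ; call the remaining positions the data positions. For every assignment d of bits to the data positions, there exists exactly one integer s with 0 ≤ s ≤ n such that the binary string c of length n defined by c_i = d(i) for each data position i and c_{2^j} = (⌊s/2^j⌋ mod 2) for each 0 ≤ j ≤ ℓ (the binary expansion of s placed at the power-of-two positions, least significant bit at position 1) satisfies Σ_{i=1}^n i·c_i ≡ 0 (mod n+1), i.e., c ∈ VT(n). -/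
/-- The systematic VT encoder with `n = 2^ℓ`: the binary string
`c = (c_1, …, c_n)` whose bit at each (1-indexed) position that is a power of
two, say `2^j`, is the `j`-th bit `⌊s/2^j⌋ mod 2` of the binary expansion of
`s` (least significant bit at position `1`), and whose bit at every other
(data) position `i` is the data bit `d i`. -/
def sysEncode (ℓ : ℕ) (d : ℕ → Bool) (s : ℕ) : List Bool :=
  List.ofFn (fun i : Fin (2 ^ ℓ) =>
    if 2 ^ Nat.log2 ((i : ℕ) + 1) = (i : ℕ) + 1 then
      s.testBit (Nat.log2 ((i : ℕ) + 1))
    else d ((i : ℕ) + 1))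


lemma sum_bits (s k : ℕ) : ∑ j ∈ Finset.range k, 2 ^ j * (s.testBit j).toNat = s % 2 ^ k := by
  induction k with
  | zero => simp [Nat.mod_one]
  | succ k ih =>
    rw [Finset.sum_range_succ, ih, pow_succ, Nat.mod_mul]
    congr 1
    rw [Nat.testBit_eq_decide_div_mod_eq]
    rcases Nat.mod_two_eq_zero_or_one (s / 2 ^ k) with h | h <;> simp [h]

lemma checksum_sysEncode (ℓ : ℕ) (d : ℕ → Bool) (s : ℕ) :
    checksum (sysEncode ℓ d s) =
      s % 2 ^ (ℓ + 1) +
      ∑ i ∈ (Finset.range (2 ^ ℓ)).filter (fun i => ¬ 2 ^ Nat.log2 (i + 1) = i + 1),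
        (i + 1) * (d (i + 1)).toNat := by
  have hlen : (sysEncode ℓ d s).length = 2 ^ ℓ := by simp [sysEncode]
  rw [checksum, hlen]
  have hget : ∀ i ∈ Finset.range (2 ^ ℓ),
      (i + 1) * ((sysEncode ℓ d s).getD i false).toNat =
      (i + 1) * (if 2 ^ Nat.log2 (i + 1) = i + 1 then (s.testBit (Nat.log2 (i + 1))).toNat
                 else (d (i + 1)).toNat) := by
    intro i hi
    rw [Finset.mem_range] at hi
    rw [List.getD_eq_getElem _ _ (by omega : i < (sysEncode ℓ d s).length)]
    simp [sysEncode, List.getElem_ofFn, apply_ite Bool.toNat]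
  rw [Finset.sum_congr rfl hget, ← Finset.sum_filter_add_sum_filter_not _
    (fun i => 2 ^ Nat.log2 (i + 1) = i + 1)]
  congr 1
  · rw [← sum_bits s (ℓ + 1)]
    refine Finset.sum_nbij (fun i => Nat.log2 (i + 1)) ?_ ?_ ?_ ?_
    · intro i hi
      simp only [Finset.mem_filter, Finset.mem_range] at hi ⊢
      have := hi.2
      have h2 : 2 ^ Nat.log2 (i + 1) ≤ 2 ^ ℓ := by omega
      have := (pow_le_pow_iff_right₀ (by norm_num : (1:ℕ) < 2)).mp h2
      omega
    · intro a ha b hb hab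
      simp only [Finset.coe_filter, Set.mem_setOf_eq, Finset.mem_range] at ha hb
      have : (2:ℕ) ^ Nat.log2 (a+1) = 2 ^ Nat.log2 (b+1) := by
        simp only at hab; rw [hab]
      omega
    · intro j hj
      simp only [Finset.coe_range, Set.mem_Iio] at hj
      refine ⟨2 ^ j - 1, ?_, ?_⟩
      · have h1 : (1:ℕ) ≤ 2 ^ j := Nat.one_le_two_pow
        have h2 : (2:ℕ) ^ j ≤ 2 ^ ℓ := pow_le_pow_right₀ (by norm_num) (by omega)
        have hlog : Nat.log2 (2 ^ j - 1 + 1) = j := by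
          rw [Nat.sub_add_cancel h1, Nat.log2_two_pow]
        simp only [Finset.coe_filter, Set.mem_setOf_eq, Finset.mem_range]
        exact ⟨by omega, by rw [hlog, Nat.sub_add_cancel h1]⟩
      · simp only
        rw [Nat.sub_add_cancel Nat.one_le_two_pow, Nat.log2_two_pow]
    · intro i hi
      simp only [Finset.mem_filter] at hi
      rw [if_pos hi.2, hi.2]
  · refine Finset.sum_congr rfl fun i hi => ?_
    simp only [Finset.mem_filter] at hi
    rw [if_neg hi.2]

/-- Correctness of the systematic VT encoder: for every assignment `d` of bits
to the data positions there is exactly one `s` with `0 ≤ s ≤ n = 2^ℓ` such that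
the resulting string is a codeword of `VT(n)`. -/
theorem sysEncode_exists_unique (ℓ : ℕ) (hℓ : 1 ≤ ℓ) (d : ℕ → Bool) :
    ∃! s : ℕ, s ≤ 2 ^ ℓ ∧ sysEncode ℓ d s ∈ VT (2 ^ ℓ) := by
  set N := 2 ^ ℓ + 1 with hN
  set D := ∑ i ∈ (Finset.range (2 ^ ℓ)).filter (fun i => ¬ 2 ^ Nat.log2 (i + 1) = i + 1),
      (i + 1) * (d (i + 1)).toNat with hD
  have hNpos : 0 < N := by positivity
  have hlen : ∀ s, (sysEncode ℓ d s).length = 2 ^ ℓ := fun s => by simp [sysEncode]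
  have key : ∀ s, s ≤ 2 ^ ℓ → checksum (sysEncode ℓ d s) = s + D := by
    intro s hs
    rw [checksum_sysEncode, ← hD, Nat.mod_eq_of_lt]
    have : 2 ^ ℓ < 2 ^ (ℓ + 1) := Nat.pow_lt_pow_right (by norm_num) (by omega)
    omega
  have hmem : ∀ s, s ≤ 2 ^ ℓ → (sysEncode ℓ d s ∈ VT (2 ^ ℓ) ↔ N ∣ s + D) := by
    intro s hs
    rw [VT, Set.mem_setOf_eq, key s hs]
    simp [hlen s, hN]
  have hdm := Nat.div_add_mod D N
  have hDlt : D % N < N := Nat.mod_lt _ hNpos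
  by_cases h0 : D % N = 0
  · refine ⟨0, ⟨by omega, (hmem 0 (by omega)).mpr ?_⟩, ?_⟩
    · exact ⟨D / N, by omega⟩
    · rintro t ⟨ht, htm⟩
      obtain ⟨k, hk⟩ := (hmem t ht).mp htm
      have h1 : t ≡ 0 [MOD N] := by
        have e1 : (t + D) % N = 0 := by rw [hk]; exact Nat.mul_mod_right N k
        have e2 : t % N = 0 := by
          have := Nat.add_mod t D N
          simp [h0] at this; omega
        simpa [Nat.ModEq, Nat.zero_mod] using e2
      have := h1.eq_of_lt_of_lt (by omega) hNpos
      omega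
  · refine ⟨N - D % N, ⟨by omega, (hmem _ (by omega)).mpr ⟨D / N + 1, by rw [Nat.mul_add, Nat.mul_one]; omega⟩⟩, ?_⟩
    rintro t ⟨ht, htm⟩
    obtain ⟨k, hk⟩ := (hmem t ht).mp htm
    have h1 : t ≡ N - D % N [MOD N] := by
      have : t + D ≡ (N - D % N) + D [MOD N] := by
        have h2 : N ∣ (N - D % N) + D := ⟨D / N + 1, by rw [Nat.mul_add, Nat.mul_one]; omega⟩
        calc t + D ≡ 0 [MOD N] := (Nat.modEq_zero_iff_dvd).mpr ⟨k, hk⟩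
        _ ≡ (N - D % N) + D [MOD N] := ((Nat.modEq_zero_iff_dvd).mpr h2).symm
      exact this.add_right_cancel' D
    exact h1.eq_of_lt_of_lt (by omega) (by omega)
end

section
/- For every ℓ ≥ 1 and n = 2^ℓ, the Varshamov–Tenengolts code VT(n) contains at least 2^{n − ℓ − 1} codewords, i.e., |VT(2^ℓ)| ≥ 2^{2^ℓ − ℓ − 1}. -/
lemma sum_testBit (r k : ℕ) :
    ∑ j ∈ Finset.range k, 2 ^ j * (r.testBit j).toNat = r % 2 ^ k := by
  induction k with
  | zero => simp [Nat.mod_one]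
  | succ k ih =>
    rw [Finset.sum_range_succ, ih, Nat.mod_pow_succ, Nat.toNat_testBit]

lemma checksum_ofFn {n : ℕ} (f : Fin n → Bool) :
    checksum (List.ofFn f) = ∑ i : Fin n, ((i : ℕ) + 1) * (f i).toNat := by
  rw [checksum, List.length_ofFn, Finset.sum_range fun i => _]
  apply Finset.sum_congr rfl
  intro i _
  congr 1
  simp [List.getD_eq_getElem?_getD, List.getElem?_ofFn, i.isLt]

namespace VTaux

/-- control positions (0-based indices): `2^j - 1` for `j < ℓ` and `2^ℓ - 1`. -/
def ctrlSet (ℓ : ℕ) : Finset ℕ :=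
  insert (2 ^ ℓ - 1) ((Finset.range ℓ).image fun j => 2 ^ j - 1)

def freeSet (ℓ : ℕ) : Finset ℕ := Finset.range (2 ^ ℓ) \ ctrlSet ℓ

def xfun (ℓ : ℕ) (v : {i // i ∈ freeSet ℓ} → Bool) : ℕ → Bool :=
  fun i => if h : i ∈ freeSet ℓ then v ⟨i, h⟩ else false

def sval (ℓ : ℕ) (v : {i // i ∈ freeSet ℓ} → Bool) : ℕ :=
  ∑ i ∈ freeSet ℓ, (i + 1) * (xfun ℓ v i).toNat

def rval (ℓ : ℕ) (v : {i // i ∈ freeSet ℓ} → Bool) : ℕ :=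
  (2 ^ ℓ + 1 - sval ℓ v % (2 ^ ℓ + 1)) % (2 ^ ℓ + 1)

def gfun (ℓ : ℕ) (v : {i // i ∈ freeSet ℓ} → Bool) : ℕ → Bool :=
  fun i =>
    if i ∈ ctrlSet ℓ then
      (if i = 2 ^ ℓ - 1 then decide (rval ℓ v = 2 ^ ℓ)
       else (rval ℓ v).testBit (Nat.log 2 (i + 1)))
    else xfun ℓ v i

def enc (ℓ : ℕ) (v : {i // i ∈ freeSet ℓ} → Bool) : List Bool :=
  List.ofFn (fun i : Fin (2 ^ ℓ) => gfun ℓ v i)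

lemma pow_inj {a b : ℕ} (h : (2:ℕ) ^ a - 1 = 2 ^ b - 1) : a = b := by
  have ha : 1 ≤ (2:ℕ) ^ a := Nat.one_le_two_pow
  have hb : 1 ≤ (2:ℕ) ^ b := Nat.one_le_two_pow
  have : (2:ℕ) ^ a = 2 ^ b := by omega
  exact Nat.pow_right_injective (le_refl 2) this

lemma top_not_mem (ℓ : ℕ) : 2 ^ ℓ - 1 ∉ (Finset.range ℓ).image fun j => 2 ^ j - 1 := by
  simp only [Finset.mem_image, Finset.mem_range, not_exists]
  rintro j ⟨hj, hje⟩
  exact absurd (pow_inj hje) (Nat.ne_of_lt hj)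

lemma ctrl_subset (ℓ : ℕ) : ctrlSet ℓ ⊆ Finset.range (2 ^ ℓ) := by
  intro i hi
  simp only [ctrlSet, Finset.mem_insert, Finset.mem_image, Finset.mem_range] at hi ⊢
  have h1 : 1 ≤ (2:ℕ) ^ ℓ := Nat.one_le_two_pow
  rcases hi with rfl | ⟨j, hj, rfl⟩
  · omega
  · have : (2:ℕ) ^ j ≤ 2 ^ ℓ := Nat.pow_le_pow_right (by norm_num) hj.le
    omega

lemma ctrl_card (ℓ : ℕ) : (ctrlSet ℓ).card = ℓ + 1 := by
  rw [ctrlSet, Finset.card_insert_of_notMem (top_not_mem ℓ),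
    Finset.card_image_of_injOn, Finset.card_range]
  intro a _ b _ h
  exact pow_inj h

lemma free_card (ℓ : ℕ) : (freeSet ℓ).card = 2 ^ ℓ - ℓ - 1 := by
  rw [freeSet, Finset.card_sdiff_of_subset (ctrl_subset ℓ), Finset.card_range, ctrl_card]
  omega

lemma rval_le (ℓ : ℕ) (v : {i // i ∈ freeSet ℓ} → Bool) : rval ℓ v ≤ 2 ^ ℓ := by
  have := Nat.mod_lt (2 ^ ℓ + 1 - sval ℓ v % (2 ^ ℓ + 1)) (y := 2 ^ ℓ + 1) (Nat.succ_pos _)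
  rw [rval]; omega

lemma checksum_enc (ℓ : ℕ) (v : {i // i ∈ freeSet ℓ} → Bool) :
    checksum (enc ℓ v) = rval ℓ v + sval ℓ v := by
  have h1 : 1 ≤ (2:ℕ) ^ ℓ := Nat.one_le_two_pow
  rw [enc, checksum_ofFn, ← Finset.sum_range fun i => (i + 1) * (gfun ℓ v i).toNat,
    ← Finset.sum_sdiff (ctrl_subset ℓ), ← freeSet]
  have hfree : ∑ i ∈ freeSet ℓ, (i + 1) * (gfun ℓ v i).toNat = sval ℓ v := by
    rw [sval]
    apply Finset.sum_congr rfl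
    intro i hi
    have hic : i ∉ ctrlSet ℓ := (Finset.mem_sdiff.mp hi).2
    simp [gfun, hic]
  have hctrl : ∑ i ∈ ctrlSet ℓ, (i + 1) * (gfun ℓ v i).toNat = rval ℓ v := by
    rw [ctrlSet, Finset.sum_insert (top_not_mem ℓ)]
    have htopmem : 2 ^ ℓ - 1 ∈ ctrlSet ℓ := Finset.mem_insert_self _ _
    have htop : (2 ^ ℓ - 1 + 1) * (gfun ℓ v (2 ^ ℓ - 1)).toNat
        = 2 ^ ℓ * (decide (rval ℓ v = 2 ^ ℓ)).toNat := by
      simp only [gfun, htopmem, if_pos rfl, if_true]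
      congr 1
      omega
    have himg : ∑ i ∈ (Finset.range ℓ).image (fun j => 2 ^ j - 1),
        (i + 1) * (gfun ℓ v i).toNat
        = ∑ j ∈ Finset.range ℓ, 2 ^ j * ((rval ℓ v).testBit j).toNat := by
      rw [Finset.sum_image (fun a _ b _ h => pow_inj h)]
      apply Finset.sum_congr rfl
      intro j hj
      have hjℓ : j < ℓ := Finset.mem_range.mp hj
      have hjpow : (2:ℕ) ^ j < 2 ^ ℓ := Nat.pow_lt_pow_right (by norm_num) hjℓ
      have h1j : 1 ≤ (2:ℕ) ^ j := Nat.one_le_two_pow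
      have hne : 2 ^ j - 1 ≠ 2 ^ ℓ - 1 := by omega
      have hmem : 2 ^ j - 1 ∈ ctrlSet ℓ := by
        rw [ctrlSet]
        exact Finset.mem_insert_of_mem (Finset.mem_image_of_mem _ hj)
      have hsub : 2 ^ j - 1 + 1 = 2 ^ j := by omega
      simp only [gfun, if_pos hmem, if_neg hne, hsub, Nat.log_pow (by norm_num : 1 < 2)]
    rw [htop, himg, sum_testBit]
    rcases eq_or_ne (rval ℓ v) (2 ^ ℓ) with hr | hr
    · rw [hr]
      simp
    · have hlt : rval ℓ v < 2 ^ ℓ := lt_of_le_of_ne (rval_le ℓ v) hr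
      rw [Nat.mod_eq_of_lt hlt]
      simp [hr]
  rw [hfree, hctrl, Nat.add_comm]

lemma enc_mem (ℓ : ℕ) (_hℓ : 1 ≤ ℓ) (v : {i // i ∈ freeSet ℓ} → Bool) :
    enc ℓ v ∈ VT (2 ^ ℓ) := by
  constructor
  · rw [enc, List.length_ofFn]
  · rw [checksum_enc ℓ v]
    set n := 2 ^ ℓ with hn
    set s := sval ℓ v with hs
    have hdm := Nat.div_add_mod s (n + 1)
    set q := s % (n + 1) with hq
    have hqlt : q < n + 1 := Nat.mod_lt _ (by positivity)
    rcases eq_or_ne q 0 with h0 | h0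
    · have hr : rval ℓ v = 0 := by
        rw [rval, ← hn, ← hs, ← hq, h0, Nat.sub_zero, Nat.mod_self]
      rw [hr, Nat.zero_add]
      exact Nat.dvd_of_mod_eq_zero h0
    · have hr : rval ℓ v = n + 1 - q := by
        rw [rval, ← hn, ← hs, ← hq]
        exact Nat.mod_eq_of_lt (by omega)
      refine ⟨s / (n + 1) + 1, ?_⟩
      rw [Nat.mul_add, Nat.mul_one]
      omega

lemma enc_inj (ℓ : ℕ) : Function.Injective (enc ℓ) := by
  intro v w h
  funext ⟨i, hi⟩
  have hic : i ∉ ctrlSet ℓ := (Finset.mem_sdiff.mp hi).2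
  have hir : i < 2 ^ ℓ := Finset.mem_range.mp (Finset.mem_sdiff.mp hi).1
  have := congrArg (fun l => l.getD i false) h
  simp only [enc, List.getD_eq_getElem?_getD, List.getElem?_ofFn, List.ofFnNthVal, hir,
    dif_pos, Option.getD_some] at this
  simpa [gfun, hic, xfun, hi] using this

end VTaux

/-- For every `ℓ ≥ 1` and `n = 2^ℓ`, the code `VT(n)` has at least
`2^(n − ℓ − 1)` codewords. -/
theorem vt_card_lower_bound (ℓ : ℕ) (hℓ : 1 ≤ ℓ) :
    2 ^ (2 ^ ℓ - ℓ - 1) ≤ (VT (2 ^ ℓ)).ncard := by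
  have hfin : (VT (2 ^ ℓ)).Finite :=
    (List.finite_length_eq Bool (2 ^ ℓ)).subset fun l hl => hl.1
  haveI : Finite ↥(VT (2 ^ ℓ)) := hfin.to_subtype
  have hle : Nat.card ({i // i ∈ VTaux.freeSet ℓ} → Bool) ≤ Nat.card ↥(VT (2 ^ ℓ)) := by
    apply Nat.card_le_card_of_injective
      (fun v => (⟨VTaux.enc ℓ v, VTaux.enc_mem ℓ hℓ v⟩ : ↥(VT (2 ^ ℓ))))
    intro v w hvw
    exact VTaux.enc_inj ℓ (congrArg Subtype.val hvw)
  rw [← Nat.card_coe_set_eq]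
  calc 2 ^ (2 ^ ℓ - ℓ - 1) = Nat.card ({i // i ∈ VTaux.freeSet ℓ} → Bool) := by
        rw [Nat.card_eq_fintype_card, Fintype.card_fun, Fintype.card_bool,
          Fintype.card_coe, VTaux.free_card]
    _ ≤ _ := hle
end
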